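/- arXiv:0706.4045 — 3 statements merged into one kernel-verified Lean document; each statement's English description precedes it below -/
import Mathlib

section
/- Let Ω be a bounded open subset of ℝ^N (N ≥ 3) and let q : closure(Ω) → ℝ be continuous with q⁻ := min_{closure(Ω)} q > 1, and set q⁺ := max_{closure(Ω)} q. Then there exists a constant μ > 0 such that for every function u : ℝ^N → ℝ of class C¹ with compact support contained in Ω, ∫_Ω (|Du(x)|^{q⁺} + |Du(x)|^{q⁻}) dx ≥ μ ∫_Ω |u(x)|^{q(x)} dx. -/
open MeasureTheory ENNReal NNReal

open Module Bornology in
/-- Poincaré-type inequality: same-exponent bound via GNS + Hölder. -/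
lemma aux_poincare {N : ℕ} (hN : 3 ≤ N) {Ω : Set (EuclideanSpace ℝ (Fin N))}
    (hΩb : IsBounded Ω) (r : ℝ≥0) (hr : 1 ≤ r) :
    ∃ K : ℝ≥0∞, K ≠ ∞ ∧ ∀ u : EuclideanSpace ℝ (Fin N) → ℝ, ContDiff ℝ 1 u →
      tsupport u ⊆ Ω →
      eLpNorm u r volume ≤ K * eLpNorm (fderiv ℝ u) r volume := by
  have hfr : finrank ℝ (EuclideanSpace ℝ (Fin N)) = N := finrank_euclideanSpace_fin
  have hr0 : (0:ℝ≥0) < r := lt_of_lt_of_le one_pos hr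
  have hN0 : (0:ℝ≥0) < (N:ℝ≥0) := by positivity
  set s : ℝ≥0 := (r⁻¹ + (N:ℝ≥0)⁻¹)⁻¹ with hs_def
  set p : ℝ≥0 := max 1 s with hp_def
  have hsum0 : (0:ℝ≥0) < r⁻¹ + (N:ℝ≥0)⁻¹ := by positivity
  have hs0 : (0:ℝ≥0) < s := by positivity
  have hsN : s < (N:ℝ≥0) := by
    have h1 : (N:ℝ≥0)⁻¹ < r⁻¹ + (N:ℝ≥0)⁻¹ := lt_add_of_pos_left _ (by positivity)
    have := inv_strictAnti₀ (by positivity) h1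
    simpa [hs_def] using this
  have hsr : s < r := by
    have h1 : r⁻¹ < r⁻¹ + (N:ℝ≥0)⁻¹ := lt_add_of_pos_right _ (by positivity)
    have := inv_strictAnti₀ (by positivity) h1
    simpa [hs_def] using this
  have hp1 : 1 ≤ p := le_max_left _ _
  have hpN : p < (N:ℝ≥0) := by
    apply max_lt _ hsN
    exact_mod_cast lt_of_lt_of_le (by norm_num) hN
  have hpr : p ≤ r := max_le hr hsr.le
  have h2p : p < finrank ℝ (EuclideanSpace ℝ (Fin N)) := by rw [hfr]; exact_mod_cast hpN
  have hpq : (p:ℝ)⁻¹ - (finrank ℝ (EuclideanSpace ℝ (Fin N)) : ℝ)⁻¹ ≤ ((r:ℝ≥0):ℝ)⁻¹ := by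
    rw [hfr]
    have hsp : s ≤ p := le_max_right _ _
    have h1 : (p:ℝ)⁻¹ ≤ (s:ℝ)⁻¹ := by
      apply inv_anti₀ (by exact_mod_cast hs0) (by exact_mod_cast hsp)
    have h2 : (s:ℝ)⁻¹ = (r:ℝ)⁻¹ + (N:ℝ)⁻¹ := by
      rw [hs_def]; push_cast; rw [inv_inv]
    rw [h2] at h1
    linarith
  set C : ℝ≥0 := eLpNormLESNormFDerivOfLeConst ℝ (volume : Measure (EuclideanSpace ℝ (Fin N))) Ω p r
  set e : ℝ := 1 / (p:ℝ≥0∞).toReal - 1 / (r:ℝ≥0∞).toReal with he_def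
  have he0 : 0 ≤ e := by
    rw [he_def]
    simp only [coe_toReal]
    rw [sub_nonneg]
    exact one_div_le_one_div_of_le (by exact_mod_cast lt_of_lt_of_le one_pos hp1)
      (by exact_mod_cast hpr)
  refine ⟨C * (volume Ω) ^ e, ?_, ?_⟩
  · apply ENNReal.mul_ne_top coe_ne_top
    exact ENNReal.rpow_ne_top_of_nonneg he0 hΩb.measure_lt_top.ne
  intro u hu hsupp
  have hsupp' : Function.support u ⊆ Ω := (subset_tsupport u).trans hsupp
  have hGNS := eLpNorm_le_eLpNorm_fderiv_of_le (μ := (volume : Measure (EuclideanSpace ℝ (Fin N))))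
    hu hsupp' hp1 h2p hpq hΩb
  have hDsupp : Function.support (fderiv ℝ u) ⊆ Ω := (support_fderiv_subset ℝ).trans hsupp
  have hmeas : AEStronglyMeasurable (fderiv ℝ u) (volume.restrict Ω) :=
    ((hu.fderiv_right (m := 0) le_rfl).continuous).aestronglyMeasurable
  have hHolder := eLpNorm_le_eLpNorm_mul_rpow_measure_univ (μ := volume.restrict Ω)
    (p := (p : ℝ≥0∞)) (q := (r : ℝ≥0∞)) (by exact_mod_cast hpr) hmeas
  rw [Measure.restrict_apply_univ] at hHolder
  calc eLpNorm u r volume ≤ C * eLpNorm (fderiv ℝ u) p volume := hGNS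
    _ = C * eLpNorm (fderiv ℝ u) p (volume.restrict Ω) := by
        rw [eLpNorm_restrict_eq_of_support_subset (ε := EuclideanSpace ℝ (Fin N) →L[ℝ] ℝ)
          (f := fderiv ℝ u) hDsupp]
    _ ≤ C * (eLpNorm (fderiv ℝ u) r (volume.restrict Ω) * (volume Ω) ^ e) := by
        gcongr
    _ = (C * (volume Ω) ^ e) * eLpNorm (fderiv ℝ u) r (volume.restrict Ω) := by ring
    _ = (C * (volume Ω) ^ e) * eLpNorm (fderiv ℝ u) r volume := by
        rw [eLpNorm_restrict_eq_of_support_subset (ε := EuclideanSpace ℝ (Fin N) →L[ℝ] ℝ)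
          (f := fderiv ℝ u) hDsupp]


open Bornology in
/-- lintegral form of the Poincaré inequality. -/
lemma aux_lintegral {N : ℕ} (hN : 3 ≤ N) {Ω : Set (EuclideanSpace ℝ (Fin N))}
    (hΩb : IsBounded Ω) (r : ℝ≥0) (hr : 1 ≤ r) :
    ∃ D : ℝ≥0∞, D ≠ ∞ ∧ ∀ u : EuclideanSpace ℝ (Fin N) → ℝ, ContDiff ℝ 1 u →
      tsupport u ⊆ Ω →
      ∫⁻ x in Ω, ENNReal.ofReal (|u x| ^ (r:ℝ)) ≤
        D * ∫⁻ x in Ω, ENNReal.ofReal (‖fderiv ℝ u x‖ ^ (r:ℝ)) := by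
  obtain ⟨K, hK, hKle⟩ := aux_poincare hN hΩb r hr
  have hr0 : (0:ℝ≥0) < r := lt_of_lt_of_le one_pos hr
  have hr0' : (0:ℝ) < (r:ℝ) := by exact_mod_cast hr0
  refine ⟨K ^ (r:ℝ), ENNReal.rpow_ne_top_of_nonneg hr0'.le hK, ?_⟩
  intro u hu hsupp
  set A : ℝ≥0∞ := ∫⁻ x, (‖u x‖₊ : ℝ≥0∞) ^ (r:ℝ) with hA
  set B : ℝ≥0∞ := ∫⁻ x, (‖fderiv ℝ u x‖₊ : ℝ≥0∞) ^ (r:ℝ) with hB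
  have hAB : A ≤ K ^ (r:ℝ) * B := by
    have h1 := hKle u hu hsupp
    rw [eLpNorm_nnreal_eq_lintegral hr0.ne', eLpNorm_nnreal_eq_lintegral hr0.ne'] at h1
    have h2 := ENNReal.rpow_le_rpow h1 hr0'.le
    rwa [ENNReal.mul_rpow_of_nonneg _ _ hr0'.le, ← ENNReal.rpow_mul, ← ENNReal.rpow_mul,
      one_div, inv_mul_cancel₀ hr0'.ne', ENNReal.rpow_one, ENNReal.rpow_one] at h2
  have hconv : ∀ y : ℝ, ENNReal.ofReal (|y| ^ (r:ℝ)) = (‖y‖₊ : ℝ≥0∞) ^ (r:ℝ) := by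
    intro y
    rw [← ENNReal.ofReal_rpow_of_nonneg (abs_nonneg y) hr0'.le, ← Real.enorm_eq_ofReal_abs] <;> rfl
  have hconv2 : ∀ y : EuclideanSpace ℝ (Fin N) →L[ℝ] ℝ,
      ENNReal.ofReal (‖y‖ ^ (r:ℝ)) = (‖y‖₊ : ℝ≥0∞) ^ (r:ℝ) := by
    intro y
    rw [← ENNReal.ofReal_rpow_of_nonneg (norm_nonneg y) hr0'.le, ofReal_norm_eq_enorm] <;> rfl
  have hAset : ∫⁻ x in Ω, (‖u x‖₊ : ℝ≥0∞) ^ (r:ℝ) = A := by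
    rw [hA]
    apply setLIntegral_eq_of_support_subset
    refine Function.support_subset_iff'.mpr (fun x hx => ?_)
    have hx0 : u x = 0 := image_eq_zero_of_notMem_tsupport (fun h => hx (hsupp h))
    simp [hx0, ENNReal.zero_rpow_of_pos hr0']
  have hBset : ∫⁻ x in Ω, (‖fderiv ℝ u x‖₊ : ℝ≥0∞) ^ (r:ℝ) = B := by
    rw [hB]
    apply setLIntegral_eq_of_support_subset
    refine Function.support_subset_iff'.mpr (fun x hx => ?_)
    have hx0 : fderiv ℝ u x = 0 := by
      have := support_fderiv_subset ℝ (f := u)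
      by_contra h
      exact hx (hsupp (this (Function.mem_support.mpr h)))
    simp [hx0, ENNReal.zero_rpow_of_pos hr0']
  calc ∫⁻ x in Ω, ENNReal.ofReal (|u x| ^ (r:ℝ))
      = ∫⁻ x in Ω, (‖u x‖₊ : ℝ≥0∞) ^ (r:ℝ) := by simp_rw [hconv]
    _ = A := hAset
    _ ≤ K ^ (r:ℝ) * B := hAB
    _ = K ^ (r:ℝ) * ∫⁻ x in Ω, (‖fderiv ℝ u x‖₊ : ℝ≥0∞) ^ (r:ℝ) := by rw [hBset]
    _ = K ^ (r:ℝ) * ∫⁻ x in Ω, ENNReal.ofReal (‖fderiv ℝ u x‖ ^ (r:ℝ)) := by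
        simp_rw [hconv2]

/-- If `Ω ⊆ ℝ^N` (`N ≥ 3`) is bounded open and `q` is continuous on `closure Ω` with
    minimum `q⁻ > 1` and maximum `q⁺`, then there is `μ > 0` such that for every `C¹`
    function `u` with compact support contained in `Ω`,
    `∫_Ω (|Du|^{q⁺} + |Du|^{q⁻}) ≥ μ ∫_Ω |u|^{q(x)}`. -/
theorem stmt5 (N : ℕ) (hN : 3 ≤ N) (Ω : Set (EuclideanSpace ℝ (Fin N)))
    (hΩo : IsOpen Ω) (hΩb : Bornology.IsBounded Ω)
    (q : EuclideanSpace ℝ (Fin N) → ℝ) (hq : ContinuousOn q (closure Ω))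
    (qm qp : ℝ) (hqm : IsLeast (q '' closure Ω) qm)
    (hqp : IsGreatest (q '' closure Ω) qp) (hqm1 : 1 < qm) :
    ∃ c : ℝ, 0 < c ∧ ∀ u : EuclideanSpace ℝ (Fin N) → ℝ,
      ContDiff ℝ 1 u → HasCompactSupport u → tsupport u ⊆ Ω →
      ENNReal.ofReal c * ∫⁻ x in Ω, ENNReal.ofReal (|u x| ^ q x) ≤
        ∫⁻ x in Ω, (ENNReal.ofReal (‖fderiv ℝ u x‖ ^ qp) +
          ENNReal.ofReal (‖fderiv ℝ u x‖ ^ qm)) := by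
  have hqm0 : (0:ℝ) < qm := lt_trans one_pos hqm1
  have hqmqp : qm ≤ qp := hqp.2 hqm.1
  have hqp1 : 1 < qp := lt_of_lt_of_le hqm1 hqmqp
  have hqp0 : (0:ℝ) < qp := lt_trans one_pos hqp1
  have hqmc : ((qm.toNNReal : ℝ≥0) : ℝ) = qm := Real.coe_toNNReal _ hqm0.le
  have hqpc : ((qp.toNNReal : ℝ≥0) : ℝ) = qp := Real.coe_toNNReal _ hqp0.le
  have hqm1' : (1:ℝ≥0) ≤ qm.toNNReal := by
    rw [← NNReal.coe_le_coe, hqmc]; exact_mod_cast hqm1.le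
  have hqp1' : (1:ℝ≥0) ≤ qp.toNNReal := by
    rw [← NNReal.coe_le_coe, hqpc]; exact_mod_cast hqp1.le
  obtain ⟨Dm, hDm, hm⟩ := aux_lintegral hN hΩb qm.toNNReal hqm1'
  obtain ⟨Dp, hDp, hp⟩ := aux_lintegral hN hΩb qp.toNNReal hqp1'
  rw [hqmc] at hm
  rw [hqpc] at hp
  set E : ℝ≥0∞ := Dm + Dp + 1 with hE
  have hE0 : E ≠ 0 := by simp [hE]
  have hEtop : E ≠ ∞ := by simp [hE, ENNReal.add_ne_top, hDm, hDp]
  have hEt0 : 0 < E.toReal := ENNReal.toReal_pos hE0 hEtop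
  refine ⟨E.toReal⁻¹, inv_pos.mpr hEt0, ?_⟩
  intro u hu hcs hts
  have hDcont : Continuous (fderiv ℝ u) := (hu.fderiv_right (m := 0) le_rfl).continuous
  have hmeasp : Measurable fun x => ENNReal.ofReal (‖fderiv ℝ u x‖ ^ qp) :=
    (hDcont.norm.measurable.pow_const qp).ennreal_ofReal
  have hmeasm : Measurable fun x => ENNReal.ofReal (|u x| ^ qm) :=
    ((hu.continuous.abs.measurable).pow_const qm).ennreal_ofReal
  set Jm : ℝ≥0∞ := ∫⁻ x in Ω, ENNReal.ofReal (‖fderiv ℝ u x‖ ^ qm) with hJm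
  set Jp : ℝ≥0∞ := ∫⁻ x in Ω, ENNReal.ofReal (‖fderiv ℝ u x‖ ^ qp) with hJp
  have hRHS : ∫⁻ x in Ω, (ENNReal.ofReal (‖fderiv ℝ u x‖ ^ qp) +
      ENNReal.ofReal (‖fderiv ℝ u x‖ ^ qm)) = Jp + Jm :=
    lintegral_add_left hmeasp _
  have hpoint : ∀ x ∈ Ω, ENNReal.ofReal (|u x| ^ q x) ≤
      ENNReal.ofReal (|u x| ^ qm) + ENNReal.ofReal (|u x| ^ qp) := by
    intro x hx
    have hxq : qm ≤ q x ∧ q x ≤ qp :=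
      ⟨hqm.2 ⟨x, subset_closure hx, rfl⟩, hqp.2 ⟨x, subset_closure hx, rfl⟩⟩
    have hreal : |u x| ^ q x ≤ |u x| ^ qm + |u x| ^ qp := by
      rcases le_or_gt (|u x|) 1 with h1 | h1
      · have hle : |u x| ^ q x ≤ |u x| ^ qm := by
          rcases eq_or_lt_of_le (abs_nonneg (u x)) with h0 | h0
          · rw [← h0, Real.zero_rpow (by linarith [hxq.1] : q x ≠ 0),
              Real.zero_rpow hqm0.ne']
          · exact Real.rpow_le_rpow_of_exponent_ge h0 h1 hxq.1
        have := Real.rpow_nonneg (abs_nonneg (u x)) qp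
        linarith
      · have hle : |u x| ^ q x ≤ |u x| ^ qp :=
          Real.rpow_le_rpow_of_exponent_le h1.le hxq.2
        have := Real.rpow_nonneg (abs_nonneg (u x)) qm
        linarith
    calc ENNReal.ofReal (|u x| ^ q x)
        ≤ ENNReal.ofReal (|u x| ^ qm + |u x| ^ qp) := ENNReal.ofReal_le_ofReal hreal
      _ = ENNReal.ofReal (|u x| ^ qm) + ENNReal.ofReal (|u x| ^ qp) :=
          ENNReal.ofReal_add (Real.rpow_nonneg (abs_nonneg _) _)
            (Real.rpow_nonneg (abs_nonneg _) _)
  have key : ∫⁻ x in Ω, ENNReal.ofReal (|u x| ^ q x) ≤ E * (Jp + Jm) := by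
    calc ∫⁻ x in Ω, ENNReal.ofReal (|u x| ^ q x)
        ≤ ∫⁻ x in Ω, (ENNReal.ofReal (|u x| ^ qm) + ENNReal.ofReal (|u x| ^ qp)) :=
          setLIntegral_mono' hΩo.measurableSet hpoint
      _ = (∫⁻ x in Ω, ENNReal.ofReal (|u x| ^ qm)) +
          ∫⁻ x in Ω, ENNReal.ofReal (|u x| ^ qp) := lintegral_add_left hmeasm _
      _ ≤ Dm * Jm + Dp * Jp := add_le_add (hm u hu hts) (hp u hu hts)
      _ ≤ E * Jm + E * Jp := by
          have h1 : Dm ≤ E := le_add_right le_self_add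
          have h2 : Dp ≤ E := le_add_right le_add_self
          exact add_le_add (mul_le_mul_left h1 _) (mul_le_mul_left h2 _)
      _ = E * (Jp + Jm) := by ring
  rw [hRHS]
  have hcE : ENNReal.ofReal E.toReal⁻¹ * E = 1 := by
    rw [ENNReal.ofReal_inv_of_pos hEt0, ENNReal.ofReal_toReal hEtop,
      ENNReal.inv_mul_cancel hE0 hEtop]
  calc ENNReal.ofReal E.toReal⁻¹ * ∫⁻ x in Ω, ENNReal.ofReal (|u x| ^ q x)
      ≤ ENNReal.ofReal E.toReal⁻¹ * (E * (Jp + Jm)) := by gcongr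
    _ = (ENNReal.ofReal E.toReal⁻¹ * E) * (Jp + Jm) := by ring
    _ = Jp + Jm := by rw [hcE, one_mul]
end

section
/- Let Ω be a bounded open subset of ℝ^N (N ≥ 3) and let p₁, p₂, q : closure(Ω) → ℝ be continuous functions satisfying 1 < p₂(x) < q⁻ ≤ q⁺ < p₁(x) < N for all x ∈ closure(Ω), where q⁻ = min_{closure(Ω)} q and q⁺ = max_{closure(Ω)} q. Then there exists a constant μ > 0 such that for every function u : ℝ^N → ℝ of class C¹ with compact support contained in Ω, ∫_Ω (|Du(x)|^{p₁(x)} + |Du(x)|^{p₂(x)}) dx ≥ (μ/2) ∫_Ω |u(x)|^{q(x)} dx. In particular λ₀ := inf { (∫_Ω (|Du|^{p₁(x)} + |Du|^{p₂(x)}) dx) / (∫_Ω |u|^{q(x)} dx) : u of class C¹ with compact support contained in Ω, u not identically zero } is strictly positive. -/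
open MeasureTheory ENNReal
open scoped NNReal

/-- `J₁(u) = ∫_Ω (|Du|^{p₁(x)} + |Du|^{p₂(x)}) dx`. -/
noncomputable def Jone (N : ℕ) (Ω : Set (EuclideanSpace ℝ (Fin N)))
    (p₁ p₂ : EuclideanSpace ℝ (Fin N) → ℝ) (u : EuclideanSpace ℝ (Fin N) → ℝ) : ℝ≥0∞ :=
  ∫⁻ x in Ω, (ENNReal.ofReal (‖fderiv ℝ u x‖ ^ p₁ x) +
    ENNReal.ofReal (‖fderiv ℝ u x‖ ^ p₂ x))

/-- `I₁(u) = ∫_Ω |u|^{q(x)} dx`. -/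
noncomputable def Ione (N : ℕ) (Ω : Set (EuclideanSpace ℝ (Fin N)))
    (q : EuclideanSpace ℝ (Fin N) → ℝ) (u : EuclideanSpace ℝ (Fin N) → ℝ) : ℝ≥0∞ :=
  ∫⁻ x in Ω, ENNReal.ofReal (|u x| ^ q x)

/-- Pointwise comparison of powers: if `0 < a ≤ s ≤ b` then `t^s ≤ t^a + t^b` for `t ≥ 0`. -/
lemma rpow_mid_le {t a b s : ℝ} (ht : 0 ≤ t) (ha : 0 < a) (has : a ≤ s) (hsb : s ≤ b) :
    t ^ s ≤ t ^ a + t ^ b := by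
  rcases ht.eq_or_lt with h0 | h0
  · rw [← h0, Real.zero_rpow (by linarith : s ≠ 0)]
    have h1 : (0:ℝ) ≤ (0:ℝ) ^ a := Real.rpow_nonneg le_rfl a
    have h2 : (0:ℝ) ≤ (0:ℝ) ^ b := Real.rpow_nonneg le_rfl b
    linarith
  rcases le_total t 1 with h1 | h1
  · have h2 := Real.rpow_le_rpow_of_exponent_ge h0 h1 has
    have h3 : 0 ≤ t ^ b := Real.rpow_nonneg ht b
    linarith
  · have h2 := Real.rpow_le_rpow_of_exponent_le h1 hsb
    have h3 : 0 ≤ t ^ a := Real.rpow_nonneg ht a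
    linarith

/-- If `Ω ⊆ ℝ^N` (`N ≥ 3`) is bounded open and `p₁, p₂, q` are continuous on
    `closure Ω` with `1 < p₂(x) < q⁻ ≤ q⁺ < p₁(x) < N`, then there is `μ > 0` with
    `J₁(u) ≥ (μ/2) I₁(u)` for all `C¹` functions `u` with compact support in `Ω`;
    in particular `λ₀ = inf J₁(u)/I₁(u) > 0`. -/
theorem stmt6 (N : ℕ) (hN : 3 ≤ N) (Ω : Set (EuclideanSpace ℝ (Fin N)))
    (hΩo : IsOpen Ω) (hΩb : Bornology.IsBounded Ω)
    (p₁ p₂ q : EuclideanSpace ℝ (Fin N) → ℝ)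
    (hp₁ : ContinuousOn p₁ (closure Ω)) (hp₂ : ContinuousOn p₂ (closure Ω))
    (hq : ContinuousOn q (closure Ω))
    (qm qp : ℝ) (hqm : IsLeast (q '' closure Ω) qm)
    (hqp : IsGreatest (q '' closure Ω) qp)
    (hcond : ∀ x ∈ closure Ω, 1 < p₂ x ∧ p₂ x < qm ∧ qp < p₁ x ∧ p₁ x < N) :
    ∃ c : ℝ, 0 < c ∧
      (∀ u : EuclideanSpace ℝ (Fin N) → ℝ,
        ContDiff ℝ 1 u → HasCompactSupport u → tsupport u ⊆ Ω →
        ENNReal.ofReal (c / 2) * Ione N Ω q u ≤ Jone N Ω p₁ p₂ u) ∧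
      0 < sInf {r : ℝ≥0∞ | ∃ u : EuclideanSpace ℝ (Fin N) → ℝ,
        ContDiff ℝ 1 u ∧ HasCompactSupport u ∧ tsupport u ⊆ Ω ∧ u ≠ 0 ∧
        r = Jone N Ω p₁ p₂ u / Ione N Ω q u} := by
  classical
  obtain ⟨⟨x₀, hx₀, hx₀q⟩, hqmlb⟩ := hqm
  obtain ⟨⟨x₁, hx₁, hx₁q⟩, hqpub⟩ := hqp
  have h1qm : 1 < qm := by
    have h := hcond x₀ hx₀; linarith [h.1, h.2.1]
  have hqmqp : qm ≤ qp := by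
    have := hqpub ⟨x₀, hx₀, hx₀q⟩; linarith
  have hqpN : qp < (N : ℝ) := by
    have h := hcond x₁ hx₁; linarith [h.2.2.1, h.2.2.2]
  have hqm0 : (0:ℝ) < qm := by linarith
  have hqp0 : (0:ℝ) < qp := by linarith
  have hqmle : ∀ x ∈ closure Ω, qm ≤ q x := fun x hx => hqmlb ⟨x, hx, rfl⟩
  have hqple : ∀ x ∈ closure Ω, q x ≤ qp := fun x hx => hqpub ⟨x, hx, rfl⟩
  have hrank : Module.finrank ℝ (EuclideanSpace ℝ (Fin N)) = N := finrank_euclideanSpace_fin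
  -- the two NNReal exponents
  set a : ℝ≥0 := ⟨qm, hqm0.le⟩ with ha_def
  set b : ℝ≥0 := ⟨qp, hqp0.le⟩ with hb_def
  set C₁ : ℝ≥0 := eLpNormLESNormFDerivOfLeConst ℝ (volume : Measure (EuclideanSpace ℝ (Fin N))) Ω a a with hC₁
  set C₂ : ℝ≥0 := eLpNormLESNormFDerivOfLeConst ℝ (volume : Measure (EuclideanSpace ℝ (Fin N))) Ω b b with hC₂
  set Kc : ℝ≥0∞ := (C₁ : ℝ≥0∞) ^ qm + (C₂ : ℝ≥0∞) ^ qp + 1 with hKc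
  have hKtop : Kc ≠ ⊤ := by
    refine ENNReal.add_ne_top.mpr ⟨ENNReal.add_ne_top.mpr ⟨?_, ?_⟩, ENNReal.one_ne_top⟩
    · exact ENNReal.rpow_ne_top_of_nonneg hqm0.le ENNReal.coe_ne_top
    · exact ENNReal.rpow_ne_top_of_nonneg hqp0.le ENNReal.coe_ne_top
  have hK0 : Kc ≠ 0 := (zero_lt_one.trans_le le_add_self).ne'
  have hKpos : 0 < Kc.toReal := ENNReal.toReal_pos hK0 hKtop
  -- the key modular inequality
  have key : ∀ u : EuclideanSpace ℝ (Fin N) → ℝ, ContDiff ℝ 1 u → HasCompactSupport u →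
      tsupport u ⊆ Ω → Ione N Ω q u ≤ Kc * Jone N Ω p₁ p₂ u := by
    intro u hu hcu hsu
    have hsupp : Function.support u ⊆ Ω := (subset_tsupport u).trans hsu
    have hdsupp : Function.support (fderiv ℝ u) ⊆ Ω :=
      (support_fderiv_subset ℝ).trans hsu
    -- bound of ∫ ‖∇u‖^e by J for suitable e
    have hJ : ∀ e : ℝ, 0 < e → (∀ x ∈ closure Ω, p₂ x ≤ e ∧ e ≤ p₁ x) →
        ∫⁻ x, (‖fderiv ℝ u x‖₊ : ℝ≥0∞) ^ e ≤ Jone N Ω p₁ p₂ u := by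
      intro e he hcomp
      have hsupp' : (Function.support fun x => (‖fderiv ℝ u x‖₊ : ℝ≥0∞) ^ e) ⊆ Ω := by
        refine Set.Subset.trans (fun x hx => ?_) hdsupp
        simp only [Function.mem_support] at hx ⊢
        intro h
        apply hx
        rw [h]
        simp [ENNReal.zero_rpow_of_pos he]
      rw [← setLIntegral_eq_of_support_subset hsupp']
      apply setLIntegral_mono' hΩo.measurableSet
      intro x hx
      have hxc := subset_closure hx
      have h2 := hcond x hxc
      have hkey := rpow_mid_le (norm_nonneg (fderiv ℝ u x))
        (by linarith [h2.1] : (0:ℝ) < p₂ x) (hcomp x hxc).1 (hcomp x hxc).2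
      calc (‖fderiv ℝ u x‖₊ : ℝ≥0∞) ^ e
          = ENNReal.ofReal (‖fderiv ℝ u x‖ ^ e) := by
            rw [← ENNReal.ofReal_rpow_of_nonneg (norm_nonneg _) he.le,
              ofReal_norm, enorm_eq_nnnorm]
        _ ≤ ENNReal.ofReal (‖fderiv ℝ u x‖ ^ p₂ x + ‖fderiv ℝ u x‖ ^ p₁ x) :=
            ENNReal.ofReal_le_ofReal hkey
        _ = ENNReal.ofReal (‖fderiv ℝ u x‖ ^ p₁ x) +
            ENNReal.ofReal (‖fderiv ℝ u x‖ ^ p₂ x) := by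
            rw [ENNReal.ofReal_add (Real.rpow_nonneg (norm_nonneg _) _)
              (Real.rpow_nonneg (norm_nonneg _) _), add_comm]
    -- Sobolev inequality for a single constant exponent
    have hS : ∀ e : ℝ≥0, 1 ≤ e → (e : ℝ) < N →
        ∫⁻ x, (‖u x‖₊ : ℝ≥0∞) ^ (e:ℝ) ≤
          ((eLpNormLESNormFDerivOfLeConst ℝ (volume : Measure (EuclideanSpace ℝ (Fin N))) Ω e e : ℝ≥0) : ℝ≥0∞) ^ (e:ℝ) *
            ∫⁻ x, (‖fderiv ℝ u x‖₊ : ℝ≥0∞) ^ (e:ℝ) := by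
      intro e h1e heN
      have he0 : e ≠ 0 := by
        intro h; rw [h] at h1e; exact absurd h1e (by norm_num)
      have he0' : (e:ℝ) ≠ 0 := by exact_mod_cast he0
      have hepos : (0:ℝ) ≤ (e:ℝ) := e.coe_nonneg
      have h2p : e < (Module.finrank ℝ (EuclideanSpace ℝ (Fin N)) : ℝ≥0) := by
        rw [hrank]; exact_mod_cast heN
      have hpq : (e:ℝ)⁻¹ - ((Module.finrank ℝ (EuclideanSpace ℝ (Fin N)) : ℝ))⁻¹ ≤ ((e:ℝ≥0) : ℝ)⁻¹ :=
        sub_le_self _ (by positivity)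
      have h := eLpNorm_le_eLpNorm_fderiv_of_le (F := ℝ)
        (μ := (volume : Measure (EuclideanSpace ℝ (Fin N)))) hu hsupp h1e h2p hpq hΩb
      have h' := ENNReal.rpow_le_rpow h hepos
      rw [eLpNorm_nnreal_eq_lintegral he0, eLpNorm_nnreal_eq_lintegral he0,
        ENNReal.mul_rpow_of_nonneg _ _ hepos, ← ENNReal.rpow_mul, ← ENNReal.rpow_mul,
        one_div, inv_mul_cancel₀ he0', ENNReal.rpow_one, ENNReal.rpow_one] at h'
      exact h'
    -- combine
    have hmeas : Measurable fun x => (‖u x‖₊ : ℝ≥0∞) ^ qm :=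
      (hu.continuous.measurable.nnnorm.coe_nnreal_ennreal).pow measurable_const
    have h1a : (1:ℝ≥0) ≤ a := by
      rw [← NNReal.coe_le_coe]; exact h1qm.le
    have h1b : (1:ℝ≥0) ≤ b := by
      rw [← NNReal.coe_le_coe]; exact (h1qm.trans_le hqmqp).le
    have hSa := hS a h1a (by exact_mod_cast lt_of_le_of_lt hqmqp hqpN)
    have hSb := hS b h1b (by exact_mod_cast hqpN)
    have hJa : ∫⁻ x, (‖fderiv ℝ u x‖₊ : ℝ≥0∞) ^ qm ≤ Jone N Ω p₁ p₂ u := by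
      refine hJ qm hqm0 fun x hx => ?_
      have h := hcond x hx
      exact ⟨by linarith [h.2.1], by linarith [h.2.2.1]⟩
    have hJb : ∫⁻ x, (‖fderiv ℝ u x‖₊ : ℝ≥0∞) ^ qp ≤ Jone N Ω p₁ p₂ u := by
      refine hJ qp hqp0 fun x hx => ?_
      have h := hcond x hx
      exact ⟨by linarith [h.2.1], by linarith [h.2.2.1]⟩
    calc Ione N Ω q u
        ≤ ∫⁻ x in Ω, ((‖u x‖₊ : ℝ≥0∞) ^ qm + (‖u x‖₊ : ℝ≥0∞) ^ qp) := by
          apply setLIntegral_mono' hΩo.measurableSet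
          intro x hx
          have hxc := subset_closure hx
          have hmid := rpow_mid_le (abs_nonneg (u x)) hqm0 (hqmle x hxc) (hqple x hxc)
          calc ENNReal.ofReal (|u x| ^ q x)
              ≤ ENNReal.ofReal (|u x| ^ qm + |u x| ^ qp) := ENNReal.ofReal_le_ofReal hmid
            _ = (‖u x‖₊ : ℝ≥0∞) ^ qm + (‖u x‖₊ : ℝ≥0∞) ^ qp := by
                rw [ENNReal.ofReal_add (Real.rpow_nonneg (abs_nonneg _) _)
                  (Real.rpow_nonneg (abs_nonneg _) _),
                  ← ENNReal.ofReal_rpow_of_nonneg (abs_nonneg _) hqm0.le,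
                  ← ENNReal.ofReal_rpow_of_nonneg (abs_nonneg _) hqp0.le,
                  ← Real.enorm_eq_ofReal_abs, enorm_eq_nnnorm]
      _ ≤ ∫⁻ x, ((‖u x‖₊ : ℝ≥0∞) ^ qm + (‖u x‖₊ : ℝ≥0∞) ^ qp) :=
          setLIntegral_le_lintegral _ _
      _ = (∫⁻ x, (‖u x‖₊ : ℝ≥0∞) ^ qm) + ∫⁻ x, (‖u x‖₊ : ℝ≥0∞) ^ qp :=
          lintegral_add_left hmeas _
      _ ≤ (C₁ : ℝ≥0∞) ^ qm * Jone N Ω p₁ p₂ u + (C₂ : ℝ≥0∞) ^ qp * Jone N Ω p₁ p₂ u := by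
          refine add_le_add (le_trans hSa ?_) (le_trans hSb ?_)
          · exact mul_le_mul_right hJa _
          · exact mul_le_mul_right hJb _
      _ = ((C₁ : ℝ≥0∞) ^ qm + (C₂ : ℝ≥0∞) ^ qp) * Jone N Ω p₁ p₂ u := (add_mul _ _ _).symm
      _ ≤ Kc * Jone N Ω p₁ p₂ u := mul_le_mul_left (self_le_add_right _ _) _
  -- boundedness and positivity of Ione
  have hIone_lt_top : ∀ u : EuclideanSpace ℝ (Fin N) → ℝ, ContDiff ℝ 1 u →
      HasCompactSupport u → Ione N Ω q u ≠ ⊤ := by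
    intro u hu hcu
    obtain ⟨M, hM⟩ := hcu.exists_bound_of_continuous hu.continuous
    set M' := max M 1 with hM'
    have hM1 : (1:ℝ) ≤ M' := le_max_right _ _
    have hb : ∀ x ∈ Ω, ENNReal.ofReal (|u x| ^ q x) ≤ ENNReal.ofReal (M' ^ qp) := by
      intro x hx
      have hxc := subset_closure hx
      apply ENNReal.ofReal_le_ofReal
      have hux : |u x| ≤ M' := le_trans (by rw [← Real.norm_eq_abs]; exact hM x) (le_max_left _ _)
      calc |u x| ^ q x ≤ M' ^ q x :=
            Real.rpow_le_rpow (abs_nonneg _) hux (by linarith [hqmle x hxc])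
        _ ≤ M' ^ qp := Real.rpow_le_rpow_of_exponent_le hM1 (hqple x hxc)
    have hle : Ione N Ω q u ≤ ENNReal.ofReal (M' ^ qp) * volume Ω := by
      refine le_trans (setLIntegral_mono' hΩo.measurableSet hb) ?_
      rw [setLIntegral_const]
    exact ne_top_of_le_ne_top
      (ENNReal.mul_ne_top ENNReal.ofReal_ne_top hΩb.measure_lt_top.ne) hle
  have hIone_pos : ∀ u : EuclideanSpace ℝ (Fin N) → ℝ, ContDiff ℝ 1 u →
      tsupport u ⊆ Ω → u ≠ 0 → Ione N Ω q u ≠ 0 := by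
    intro u hu hsu hune
    have hx0 : ∃ x, u x ≠ 0 := by
      by_contra h; push_neg at h; exact hune (funext h)
    obtain ⟨z, hz⟩ := hx0
    have hzΩ : z ∈ Ω := hsu (subset_tsupport u (Function.mem_support.mpr hz))
    set δ := |u z| / 2 with hδdef
    have habs : 0 < |u z| := abs_pos.mpr hz
    have hδ : 0 < δ := by positivity
    set V := Ω ∩ (fun x => |u x|) ⁻¹' Set.Ioi δ with hV
    have hVopen : IsOpen V := hΩo.inter (isOpen_Ioi.preimage (hu.continuous.abs))
    have hzV : z ∈ V := ⟨hzΩ, by simp only [Set.mem_preimage, Set.mem_Ioi]; linarith⟩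
    set m := min (δ ^ qm) (δ ^ qp) with hm
    have hmpos : 0 < m := lt_min (Real.rpow_pos_of_pos hδ _) (Real.rpow_pos_of_pos hδ _)
    have hlow : ∀ x ∈ V, ENNReal.ofReal m ≤ ENNReal.ofReal (|u x| ^ q x) := by
      intro x hx
      obtain ⟨hxΩ, hxδ⟩ := hx
      have hxc := subset_closure hxΩ
      have hδx : δ ≤ |u x| := le_of_lt hxδ
      apply ENNReal.ofReal_le_ofReal
      rcases le_total (|u x|) 1 with h | h
      · calc m ≤ δ ^ qp := min_le_right _ _
          _ ≤ |u x| ^ qp := Real.rpow_le_rpow hδ.le hδx hqp0.le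
          _ ≤ |u x| ^ q x := Real.rpow_le_rpow_of_exponent_ge (lt_of_lt_of_le hδ hδx) h
              (hqple x hxc)
      · calc m ≤ δ ^ qm := min_le_left _ _
          _ ≤ |u x| ^ qm := Real.rpow_le_rpow hδ.le hδx hqm0.le
          _ ≤ |u x| ^ q x := Real.rpow_le_rpow_of_exponent_le h (hqmle x hxc)
    have hge : ENNReal.ofReal m * volume V ≤ Ione N Ω q u := by
      calc ENNReal.ofReal m * volume V = ∫⁻ _ in V, ENNReal.ofReal m := (setLIntegral_const _ _).symm
        _ ≤ ∫⁻ x in V, ENNReal.ofReal (|u x| ^ q x) :=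
            setLIntegral_mono' hVopen.measurableSet hlow
        _ ≤ Ione N Ω q u := lintegral_mono_set Set.inter_subset_left
    have hpos : 0 < ENNReal.ofReal m * volume V :=
      ENNReal.mul_pos (ENNReal.ofReal_pos.mpr hmpos).ne'
        (hVopen.measure_pos volume ⟨z, hzV⟩).ne'
    exact (lt_of_lt_of_le hpos hge).ne'
  -- conclusion
  refine ⟨2 * Kc.toReal⁻¹, by positivity, ?_, ?_⟩
  · intro u hu hcu hsu
    have hc2 : ENNReal.ofReal (2 * Kc.toReal⁻¹ / 2) = Kc⁻¹ := by
      have h2 : 2 * Kc.toReal⁻¹ / 2 = Kc.toReal⁻¹ := by ring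
      rw [h2, ENNReal.ofReal_inv_of_pos hKpos, ENNReal.ofReal_toReal hKtop]
    rw [hc2]
    calc Kc⁻¹ * Ione N Ω q u ≤ Kc⁻¹ * (Kc * Jone N Ω p₁ p₂ u) :=
          mul_le_mul_right (key u hu hcu hsu) _
      _ = Jone N Ω p₁ p₂ u := by
          rw [← mul_assoc, ENNReal.inv_mul_cancel hK0 hKtop, one_mul]
  · refine lt_of_lt_of_le (b := Kc⁻¹) ?_ (le_sInf ?_)
    · exact ENNReal.inv_pos.mpr hKtop
    intro r hr
    obtain ⟨u, hu, hcu, hsu, hune, rfl⟩ := hr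
    have hI0 := hIone_pos u hu hsu hune
    have hItop := hIone_lt_top u hu hcu
    rw [ENNReal.le_div_iff_mul_le (Or.inl hI0) (Or.inl hItop)]
    calc Kc⁻¹ * Ione N Ω q u ≤ Kc⁻¹ * (Kc * Jone N Ω p₁ p₂ u) :=
          mul_le_mul_right (key u hu hcu hsu) _
      _ = Jone N Ω p₁ p₂ u := by
          rw [← mul_assoc, ENNReal.inv_mul_cancel hK0 hKtop, one_mul]
end

section
/- Let (X, μ) be a measure space and p : X → ℝ a measurable exponent function with 1 < p⁻ ≤ p(x) ≤ p⁺ < ∞ for μ-almost every x, where p⁻, p⁺ are real constants, and let p'(x) = p(x)/(p(x) − 1) be the pointwise conjugate exponent, with (p')⁻ := p⁺/(p⁺ − 1). Then for all measurable u, v : X → ℝ with |u|_{p(·)} and |v|_{p'(·)} finite, ∫_X |u(x) v(x)| dμ(x) ≤ (1/p⁻ + 1/(p')⁻) · |u|_{p(·)} · |v|_{p'(·)}. -/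
open MeasureTheory ENNReal

/-- The modular `ρ_{p(·)}(u) = ∫_X |u(x)|^{p(x)} dμ(x)`. -/
noncomputable def modular {X : Type*} [MeasurableSpace X] (μ : Measure X)
    (p : X → ℝ) (u : X → ℝ) : ℝ≥0∞ :=
  ∫⁻ x, ENNReal.ofReal (|u x| ^ p x) ∂μ

/-- The Luxemburg norm `|u|_{p(·)} = inf { λ > 0 : ρ_{p(·)}(u/λ) ≤ 1 }`,
    with `inf ∅ = ∞`, as a value in `[0,∞]`. -/
noncomputable def luxNorm {X : Type*} [MeasurableSpace X] (μ : Measure X)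
    (p : X → ℝ) (u : X → ℝ) : ℝ≥0∞ :=
  sInf {l : ℝ≥0∞ | ∃ m : ℝ, 0 < m ∧ l = ENNReal.ofReal m ∧
    modular μ p (fun x => u x / m) ≤ 1}

/-- Hölder-type inequality in variable exponent Lebesgue spaces: if
    `1 < p⁻ ≤ p(x) ≤ p⁺ < ∞` a.e., `p'(x) = p(x)/(p(x)−1)` and
    `(p')⁻ = p⁺/(p⁺−1)`, then for measurable `u, v` with finite norms,
    `∫ |uv| dμ ≤ (1/p⁻ + 1/(p')⁻) |u|_{p(·)} |v|_{p'(·)}`. -/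
theorem stmt13 {X : Type*} [MeasurableSpace X] (μ : Measure X)
    (p : X → ℝ) (hp : Measurable p) (pm pp : ℝ) (hpm : 1 < pm) (hle : pm ≤ pp)
    (hb : ∀ᵐ x ∂μ, pm ≤ p x ∧ p x ≤ pp)
    (u v : X → ℝ) (hu : Measurable u) (hv : Measurable v)
    (hufin : luxNorm μ p u ≠ ⊤)
    (hvfin : luxNorm μ (fun x => p x / (p x - 1)) v ≠ ⊤) :
    ∫⁻ x, ENNReal.ofReal |u x * v x| ∂μ ≤
      ENNReal.ofReal (1 / pm + 1 / (pp / (pp - 1))) * luxNorm μ p u *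
        luxNorm μ (fun x => p x / (p x - 1)) v := by
  classical
  set q : X → ℝ := fun x => p x / (p x - 1) with hqdef
  set qm : ℝ := pp / (pp - 1) with hqmdef
  have hpp : 1 < pp := lt_of_lt_of_le hpm hle
  have hppos : 0 < pp - 1 := by linarith
  have hqm0 : 0 < qm := by positivity
  have hC0 : 0 ≤ 1 / pm + 1 / qm := by positivity
  set C : ℝ≥0∞ := ENNReal.ofReal (1 / pm + 1 / qm) with hCdef
  have hCne : C ≠ ⊤ := ENNReal.ofReal_ne_top
  -- Key estimate for admissible parameters
  have key : ∀ m n : ℝ, 0 < m → 0 < n →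
      modular μ p (fun x => u x / m) ≤ 1 →
      modular μ q (fun x => v x / n) ≤ 1 →
      ∫⁻ x, ENNReal.ofReal |u x * v x| ∂μ ≤
        C * ENNReal.ofReal m * ENNReal.ofReal n := by
    intro m n hm hn hmod1 hmod2
    have hpt : ∀ᵐ x ∂μ, ENNReal.ofReal |u x / m * (v x / n)| ≤
        ENNReal.ofReal (1 / pm) * ENNReal.ofReal (|u x / m| ^ p x)
          + ENNReal.ofReal (1 / qm) * ENNReal.ofReal (|v x / n| ^ q x) := by
      filter_upwards [hb] with x hx
      obtain ⟨h1, h2⟩ := hx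
      have hp1 : 1 < p x := lt_of_lt_of_le hpm h1
      have hp0 : 0 < p x := by linarith
      have hps0 : 0 < p x - 1 := by linarith
      have hconj : (p x).HolderConjugate (q x) :=
        Real.HolderConjugate.conjExponent hp1
      have hq0 : 0 < q x := hconj.symm.pos
      have hyoung : |u x / m| * |v x / n| ≤
          |u x / m| ^ p x / p x + |v x / n| ^ q x / q x :=
        Real.young_inequality_of_nonneg (abs_nonneg _) (abs_nonneg _) hconj
      have hinv1 : 1 / p x ≤ 1 / pm :=
        one_div_le_one_div_of_le (by linarith) h1
      have hinv2 : 1 / q x ≤ 1 / qm := by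
        have e1 : 1 / q x = 1 - 1 / p x := by
          simp only [q]
          field_simp
        have e2 : 1 / qm = 1 - 1 / pp := by
          simp only [hqmdef]
          field_simp
        have : 1 / pp ≤ 1 / p x := one_div_le_one_div_of_le hp0 h2
        rw [e1, e2]; linarith
      have hA : (0:ℝ) ≤ |u x / m| ^ p x := Real.rpow_nonneg (abs_nonneg _) _
      have hB : (0:ℝ) ≤ |v x / n| ^ q x := Real.rpow_nonneg (abs_nonneg _) _
      have hle2 : |u x / m * (v x / n)| ≤
          1 / pm * |u x / m| ^ p x + 1 / qm * |v x / n| ^ q x := by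
        rw [abs_mul]
        refine hyoung.trans (add_le_add ?_ ?_)
        · rw [div_eq_mul_one_div, mul_comm]
          exact mul_le_mul_of_nonneg_right hinv1 hA
        · rw [div_eq_mul_one_div, mul_comm]
          exact mul_le_mul_of_nonneg_right hinv2 hB
      calc ENNReal.ofReal |u x / m * (v x / n)|
          ≤ ENNReal.ofReal (1 / pm * |u x / m| ^ p x + 1 / qm * |v x / n| ^ q x) :=
            ENNReal.ofReal_le_ofReal hle2
        _ = ENNReal.ofReal (1 / pm) * ENNReal.ofReal (|u x / m| ^ p x)
              + ENNReal.ofReal (1 / qm) * ENNReal.ofReal (|v x / n| ^ q x) := by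
            rw [ENNReal.ofReal_add (by positivity) (by positivity),
              ENNReal.ofReal_mul (by positivity), ENNReal.ofReal_mul (by positivity)]
    have hmeas1 : Measurable fun x =>
        ENNReal.ofReal (1 / pm) * ENNReal.ofReal (|u x / m| ^ p x) := by
      exact (ENNReal.measurable_ofReal.comp (((hu.div_const m).abs).pow hp)).const_mul _
    have hint : ∫⁻ x, ENNReal.ofReal |u x / m * (v x / n)| ∂μ ≤ C := by
      calc ∫⁻ x, ENNReal.ofReal |u x / m * (v x / n)| ∂μ
          ≤ ∫⁻ x, (ENNReal.ofReal (1 / pm) * ENNReal.ofReal (|u x / m| ^ p x)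
              + ENNReal.ofReal (1 / qm) * ENNReal.ofReal (|v x / n| ^ q x)) ∂μ :=
            lintegral_mono_ae hpt
        _ = ENNReal.ofReal (1 / pm) * modular μ p (fun x => u x / m)
              + ENNReal.ofReal (1 / qm) * modular μ q (fun x => v x / n) := by
            rw [lintegral_add_left hmeas1,
              lintegral_const_mul' _ _ ENNReal.ofReal_ne_top,
              lintegral_const_mul' _ _ ENNReal.ofReal_ne_top]
            rfl
        _ ≤ ENNReal.ofReal (1 / pm) * 1 + ENNReal.ofReal (1 / qm) * 1 :=
            add_le_add (mul_le_mul_right hmod1 _) (mul_le_mul_right hmod2 _)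
        _ = C := by
            rw [mul_one, mul_one, hCdef, ENNReal.ofReal_add (by positivity) (by positivity)]
    calc ∫⁻ x, ENNReal.ofReal |u x * v x| ∂μ
        = ∫⁻ x, ENNReal.ofReal (m * n) * ENNReal.ofReal |u x / m * (v x / n)| ∂μ := by
          apply lintegral_congr
          intro x
          rw [← ENNReal.ofReal_mul (by positivity)]
          congr 1
          rw [abs_mul, abs_mul, abs_div, abs_div, abs_of_pos hm, abs_of_pos hn]
          field_simp
      _ = ENNReal.ofReal (m * n) * ∫⁻ x, ENNReal.ofReal |u x / m * (v x / n)| ∂μ :=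
          lintegral_const_mul' _ _ ENNReal.ofReal_ne_top
      _ ≤ ENNReal.ofReal (m * n) * C := mul_le_mul_right hint _
      _ = C * ENNReal.ofReal m * ENNReal.ofReal n := by
          rw [ENNReal.ofReal_mul hm.le]; ring
  -- Pass to the infimum
  set Su : Set ℝ≥0∞ := {l : ℝ≥0∞ | ∃ m : ℝ, 0 < m ∧ l = ENNReal.ofReal m ∧
    modular μ p (fun x => u x / m) ≤ 1} with hSu
  set Sv : Set ℝ≥0∞ := {l : ℝ≥0∞ | ∃ m : ℝ, 0 < m ∧ l = ENNReal.ofReal m ∧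
    modular μ q (fun x => v x / m) ≤ 1} with hSv
  have hLu : luxNorm μ p u = sInf Su := rfl
  have hLv : luxNorm μ (fun x => p x / (p x - 1)) v = sInf Sv := rfl
  have hSune : Su.Nonempty := by
    by_contra h
    rw [Set.not_nonempty_iff_eq_empty] at h
    rw [hLu, h, sInf_empty] at hufin
    exact hufin rfl
  have hSvne : Sv.Nonempty := by
    by_contra h
    rw [Set.not_nonempty_iff_eq_empty] at h
    rw [hLv, h, sInf_empty] at hvfin
    exact hvfin rfl
  have hvne : sInf Sv ≠ ⊤ := by rw [← hLv]; exact hvfin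
  rw [hLu, hLv]
  have h1 : ∀ a ∈ Su, ∫⁻ x, ENNReal.ofReal |u x * v x| ∂μ ≤ C * a * sInf Sv := by
    rintro a ⟨m, hm, rfl, hmod⟩
    have : Nonempty Sv := hSvne.to_subtype
    rw [sInf_eq_iInf', ENNReal.mul_iInf (fun h =>
      absurd h (ENNReal.mul_ne_top hCne ENNReal.ofReal_ne_top))]
    refine le_iInf ?_
    rintro ⟨b, n, hn, rfl, hmod2⟩
    exact key m n hm hn hmod hmod2
  have : Nonempty Su := hSune.to_subtype
  rw [sInf_eq_iInf' Su]
  rw [ENNReal.mul_iInf (fun h => absurd h hCne), ENNReal.iInf_mul (fun h => absurd h hvne)]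
  refine le_iInf ?_
  rintro ⟨a, ha⟩
  exact h1 a ha
end
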